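/- arXiv:1305.2714 — 3 statements merged into one kernel-verified Lean document; each statement's English description precedes it below -/
import Mathlib

section
/- Let f : ℝⁿ → ℝ be a convex function, x₀ ∈ ℝⁿ, λ ≥ 0, and let v be a standard Gaussian vector on ℝⁿ. For σ > 0 let x*(σλ, σv) be the unique minimizer over x of σλ f(x) + (1/2)‖(x₀+σv) − x‖₂². Then lim_{σ→0} E[‖x*(σλ, σv) − x₀‖₂²]/σ² = D(λ∂f(x₀)). -/
open MeasureTheory ProbabilityTheory Filter Topology Metric
open scoped RealInnerProductSpace ENNReal Pointwise Matrix

noncomputable section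

/-- Standard Gaussian measure on `ℝⁿ` (mean zero, identity covariance). -/
def stdGaussian (n : ℕ) : Measure (EuclideanSpace ℝ (Fin n)) :=
  Measure.map (⇑(EuclideanSpace.equiv (Fin n) ℝ).symm)
    (Measure.pi fun _ : Fin n => gaussianReal 0 1)

/-- `D(K)`: mean squared distance of a standard Gaussian vector to `K`. -/
def msd (n : ℕ) (K : Set (EuclideanSpace ℝ (Fin n))) : ℝ :=
  ∫ g, (Metric.infDist g K) ^ 2 ∂(stdGaussian n)

variable {E : Type*} [NormedAddCommGroup E] [InnerProductSpace ℝ E]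

/-- Subdifferential of `f` at `x₀`. -/
def subdiff (f : E → ℝ) (x₀ : E) : Set E :=
  {s | ∀ x, f x₀ + ⟪s, x - x₀⟫ ≤ f x}

/-- Cone generated by a set: `{c • x : c ≥ 0, x ∈ A}`. -/
def coneOf (A : Set E) : Set E :=
  {y | ∃ c : ℝ, 0 ≤ c ∧ ∃ x ∈ A, y = c • x}

/-- Set of feasible directions of `C` at `x₀`. -/
def feasible (C : Set E) (x₀ : E) : Set E := {z | x₀ + z ∈ C}

/-- Tangent cone of `C` at `x₀`: the closure of the cone of feasible directions. -/
def tangentConeOf (C : Set E) (x₀ : E) : Set E := closure (coneOf (feasible C x₀))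

/-- Polar cone of a set `K`. -/
def polarCone (K : Set E) : Set E := {v | ∀ x ∈ K, ⟪v, x⟫ ≤ 0}

open Classical in
/-- Metric projection onto `K` (the unique nearest point when `K` is nonempty,
closed and convex). -/
def projSet (K : Set E) (x : E) : E :=
  if h : ∃ y ∈ K, dist x y = Metric.infDist x K then h.choose else x

/-- Matrix-vector multiplication as a map between Euclidean spaces. -/
def matVec {m n : ℕ} (A : Matrix (Fin m) (Fin n) ℝ) (x : EuclideanSpace ℝ (Fin n)) :
    EuclideanSpace ℝ (Fin m) :=
  (EuclideanSpace.equiv (Fin m) ℝ).symm (A.mulVec (EuclideanSpace.equiv (Fin n) ℝ x))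

/-- Statistical dimension of `K`: `E ‖Proj(g,K)‖²` for standard Gaussian `g`. -/
def statDim (n : ℕ) (K : Set (EuclideanSpace ℝ (Fin n))) : ℝ :=
  ∫ g, ‖projSet K g‖ ^ 2 ∂(stdGaussian n)

end

/-- Borel/product measurable structure on real matrices. -/
instance matrixMeasurableSpace {m n : ℕ} : MeasurableSpace (Matrix (Fin m) (Fin n) ℝ) :=
  (inferInstance : MeasurableSpace (Fin m → Fin n → ℝ))

noncomputable section AuxProofs

variable {E : Type*} [NormedAddCommGroup E] [InnerProductSpace ℝ E]

def slp (f : E → ℝ) (x₀ u : E) (σ : ℝ) : ℝ := (f (x₀ + σ • u) - f x₀) / σ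

def dirD (f : E → ℝ) (x₀ u : E) : ℝ := sInf (slp f x₀ u '' Set.Ioi 0)

lemma slp_mono {f : E → ℝ} (hf : ConvexOn ℝ Set.univ f) (x₀ u : E) {s t : ℝ}
    (hs : 0 < s) (hst : s ≤ t) : slp f x₀ u s ≤ slp f x₀ u t := by
  have ht : 0 < t := hs.trans_le hst
  have hr0 : 0 ≤ s / t := by positivity
  have hr1 : s / t ≤ 1 := div_le_one_of_le₀ hst ht.le
  have hcomb : (1 - s / t) • x₀ + (s / t) • (x₀ + t • u) = x₀ + s • u := by
    rw [smul_add, sub_smul, one_smul, smul_smul, div_mul_cancel₀ _ ht.ne']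
    abel
  have key := hf.2 (Set.mem_univ x₀) (Set.mem_univ (x₀ + t • u))
    (by linarith : (0:ℝ) ≤ 1 - s / t) hr0 (by ring)
  rw [hcomb] at key
  simp only [smul_eq_mul] at key
  rw [slp, slp, div_le_div_iff₀ hs ht]
  field_simp at key
  nlinarith [key]

lemma slp_neg_add_nonneg {f : E → ℝ} (hf : ConvexOn ℝ Set.univ f) (x₀ u : E) {σ : ℝ}
    (hσ : 0 < σ) : 0 ≤ slp f x₀ u σ + slp f x₀ (-u) σ := by
  have hcomb : (1/2 : ℝ) • (x₀ + σ • u) + (1/2 : ℝ) • (x₀ + σ • (-u)) = x₀ := by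
    module
  have key := hf.2 (Set.mem_univ (x₀ + σ • u)) (Set.mem_univ (x₀ + σ • (-u)))
    (by norm_num : (0:ℝ) ≤ 1/2) (by norm_num : (0:ℝ) ≤ 1/2) (by norm_num)
  rw [hcomb] at key
  simp only [smul_eq_mul] at key
  rw [slp, slp, ← add_div]
  apply div_nonneg _ hσ.le
  linarith

lemma slp_lower {f : E → ℝ} (hf : ConvexOn ℝ Set.univ f) (x₀ u : E) {σ : ℝ}
    (hσ : 0 < σ) : -slp f x₀ (-u) 1 ≤ slp f x₀ u σ := by
  rcases le_total σ 1 with h | h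
  · have h1 := slp_neg_add_nonneg hf x₀ u hσ
    have h2 := slp_mono hf x₀ (-u) hσ h
    linarith
  · have h1 := slp_neg_add_nonneg hf x₀ u one_pos
    have h2 := slp_mono hf x₀ u one_pos h
    linarith

lemma slp_bddBelow {f : E → ℝ} (hf : ConvexOn ℝ Set.univ f) (x₀ u : E) :
    BddBelow (slp f x₀ u '' Set.Ioi 0) := by
  refine ⟨-slp f x₀ (-u) 1, ?_⟩
  rintro _ ⟨σ, hσ, rfl⟩
  exact slp_lower hf x₀ u hσ

lemma slp_nonemptyIm (f : E → ℝ) (x₀ u : E) : (slp f x₀ u '' Set.Ioi 0).Nonempty :=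
  ⟨_, ⟨1, Set.mem_Ioi.2 one_pos, rfl⟩⟩

lemma dirD_le_slp {f : E → ℝ} (hf : ConvexOn ℝ Set.univ f) (x₀ u : E) {σ : ℝ} (hσ : 0 < σ) :
    dirD f x₀ u ≤ slp f x₀ u σ :=
  csInf_le (slp_bddBelow hf x₀ u) ⟨σ, hσ, rfl⟩

lemma dirD_zero (f : E → ℝ) (x₀ : E) : dirD f x₀ 0 = 0 := by
  have : slp f x₀ 0 '' Set.Ioi 0 = {0} := by
    apply Set.eq_singleton_iff_unique_mem.2
    constructor
    · exact ⟨1, Set.mem_Ioi.2 one_pos, by simp [slp]⟩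
    · rintro _ ⟨σ, hσ, rfl⟩; simp [slp]
  rw [dirD, this, csInf_singleton]

lemma dirD_add_le {f : E → ℝ} (hf : ConvexOn ℝ Set.univ f) (x₀ u v : E) :
    dirD f x₀ (u + v) ≤ dirD f x₀ u + dirD f x₀ v := by
  refine le_of_forall_pos_le_add fun ε hε => ?_
  obtain ⟨_, ⟨σ₁, hσ₁, rfl⟩, h₁⟩ := exists_lt_of_csInf_lt (slp_nonemptyIm f x₀ u)
    (show dirD f x₀ u < dirD f x₀ u + ε/2 by linarith)
  obtain ⟨_, ⟨σ₂, hσ₂, rfl⟩, h₂⟩ := exists_lt_of_csInf_lt (slp_nonemptyIm f x₀ v)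
    (show dirD f x₀ v < dirD f x₀ v + ε/2 by linarith)
  rw [Set.mem_Ioi] at hσ₁ hσ₂
  set σ := min σ₁ σ₂ / 2 with hσdef
  have hσ : 0 < σ := by positivity
  have h2σ1 : 2 * σ ≤ σ₁ := by
    have := min_le_left σ₁ σ₂; rw [hσdef]; linarith
  have h2σ2 : 2 * σ ≤ σ₂ := by
    have := min_le_right σ₁ σ₂; rw [hσdef]; linarith
  have hmid : slp f x₀ (u + v) σ ≤ slp f x₀ u (2*σ) + slp f x₀ v (2*σ) := by
    have hcomb : (1/2 : ℝ) • (x₀ + (2*σ) • u) + (1/2 : ℝ) • (x₀ + (2*σ) • v)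
        = x₀ + σ • (u + v) := by
      module
    have key := hf.2 (Set.mem_univ (x₀ + (2*σ) • u)) (Set.mem_univ (x₀ + (2*σ) • v))
      (by norm_num : (0:ℝ) ≤ 1/2) (by norm_num : (0:ℝ) ≤ 1/2) (by norm_num)
    rw [hcomb] at key
    simp only [smul_eq_mul] at key
    rw [slp, slp, slp, ← add_div]
    rw [div_le_div_iff₀ hσ (by positivity)]
    nlinarith [key]
  calc dirD f x₀ (u + v) ≤ slp f x₀ (u + v) σ := dirD_le_slp hf x₀ _ hσ
    _ ≤ slp f x₀ u (2*σ) + slp f x₀ v (2*σ) := hmid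
    _ ≤ slp f x₀ u σ₁ + slp f x₀ v σ₂ :=
        add_le_add (slp_mono hf x₀ u (by positivity) h2σ1) (slp_mono hf x₀ v (by positivity) h2σ2)
    _ ≤ dirD f x₀ u + dirD f x₀ v + ε := by linarith

lemma dirD_smul {f : E → ℝ} (hf : ConvexOn ℝ Set.univ f) (x₀ u : E) {c : ℝ} (hc : 0 < c) :
    dirD f x₀ (c • u) = c * dirD f x₀ u := by
  have him : slp f x₀ (c • u) '' Set.Ioi 0 = c • (slp f x₀ u '' Set.Ioi 0) := by
    ext r
    simp only [Set.mem_image, Set.mem_smul_set, Set.mem_Ioi]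
    constructor
    · rintro ⟨σ, hσ, rfl⟩
      refine ⟨slp f x₀ u (σ * c), ⟨σ * c, by positivity, rfl⟩, ?_⟩
      rw [slp, slp, smul_eq_mul, smul_smul]
      field_simp
    · rintro ⟨_, ⟨τ, hτ, rfl⟩, rfl⟩
      refine ⟨τ / c, by positivity, ?_⟩
      rw [slp, slp, smul_smul, div_mul_cancel₀ _ hc.ne', smul_eq_mul]
      field_simp
  rw [dirD, him, Real.sInf_smul_of_nonneg hc.le, smul_eq_mul, dirD]

lemma dirD_add_neg_nonneg {f : E → ℝ} (hf : ConvexOn ℝ Set.univ f) (x₀ u : E) :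
    0 ≤ dirD f x₀ u + dirD f x₀ (-u) := by
  have := dirD_add_le hf x₀ u (-u)
  rw [add_neg_cancel, dirD_zero] at this
  linarith


lemma inner_le_dirD {f : E → ℝ} (hf : ConvexOn ℝ Set.univ f) {x₀ s : E}
    (hs : s ∈ subdiff f x₀) (u : E) : ⟪s, u⟫ ≤ dirD f x₀ u := by
  apply le_csInf (slp_nonemptyIm f x₀ u)
  rintro _ ⟨σ, hσ, rfl⟩
  rw [Set.mem_Ioi] at hσ
  have h := hs (x₀ + σ • u)
  rw [add_sub_cancel_left, real_inner_smul_right] at h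
  rw [slp, le_div_iff₀ hσ]
  linarith

lemma mem_subdiff_of_le {f : E → ℝ} (hf : ConvexOn ℝ Set.univ f) {x₀ s : E}
    (h : ∀ u, ⟪s, u⟫ ≤ dirD f x₀ u) : s ∈ subdiff f x₀ := by
  intro x
  have h1 := (h (x - x₀)).trans (dirD_le_slp hf x₀ (x - x₀) one_pos)
  rw [slp, one_smul, add_sub_cancel, div_one] at h1
  linarith

lemma exists_subdiff_inner_eq_of_ne {E : Type*} [NormedAddCommGroup E] [InnerProductSpace ℝ E]
    [CompleteSpace E] [FiniteDimensional ℝ E] {f : E → ℝ} (hf : ConvexOn ℝ Set.univ f)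
    (x₀ : E) {u : E} (hu : u ≠ 0) : ∃ s ∈ subdiff f x₀, ⟪s, u⟫ = dirD f x₀ u := by
  have hsmul : ∀ (c : ℝ), c * dirD f x₀ u ≤ dirD f x₀ (c • u) := by
    intro c
    rcases lt_trichotomy c 0 with hc | hc | hc
    · have h1 : dirD f x₀ (c • u) = -c * dirD f x₀ (-u) := by
        have : c • u = (-c) • (-u) := by module
        rw [this, dirD_smul hf x₀ (-u) (by linarith)]
      have h2 := dirD_add_neg_nonneg hf x₀ u
      nlinarith
    · simp [hc, dirD_zero]
    · rw [dirD_smul hf x₀ u hc]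
  set pm : E →ₗ.[ℝ] ℝ := LinearPMap.mkSpanSingleton u (dirD f x₀ u) hu with hpm
  have hdom : ∀ x : pm.domain, pm x ≤ dirD f x₀ (x : E) := by
    rintro ⟨x, hx⟩
    obtain ⟨c, rfl⟩ := Submodule.mem_span_singleton.mp hx
    have happ : pm ⟨c • u, hx⟩ = c • (dirD f x₀ u) :=
      LinearPMap.mkSpanSingleton'_apply u (dirD f x₀ u) _ c hx
    rw [happ, smul_eq_mul]
    exact hsmul c
  obtain ⟨g, hg_eq, hg_le⟩ := exists_extension_of_le_sublinear pm (dirD f x₀)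
    (fun c hc x => dirD_smul hf x₀ x hc) (dirD_add_le hf x₀) hdom
  set s : E := (InnerProductSpace.toDual ℝ E).symm (LinearMap.toContinuousLinearMap g) with hs
  have hinner : ∀ x : E, ⟪s, x⟫ = g x := by
    intro x
    rw [hs, InnerProductSpace.toDual_symm_apply]
    simp
  refine ⟨s, mem_subdiff_of_le hf fun v => by rw [hinner]; exact hg_le v, ?_⟩
  rw [hinner]
  have := hg_eq ⟨u, Submodule.mem_span_singleton_self u⟩
  exact this.trans (LinearPMap.mkSpanSingleton_apply ℝ ℝ hu (dirD f x₀ u))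

lemma exists_subdiff_inner_eq {E : Type*} [NormedAddCommGroup E] [InnerProductSpace ℝ E]
    [CompleteSpace E] [FiniteDimensional ℝ E] {f : E → ℝ} (hf : ConvexOn ℝ Set.univ f)
    (x₀ u : E) : ∃ s ∈ subdiff f x₀, ⟪s, u⟫ = dirD f x₀ u := by
  by_cases hu : u = 0
  · subst hu
    rw [dirD_zero]
    by_cases hE : ∃ v : E, v ≠ 0
    · obtain ⟨v, hv⟩ := hE
      obtain ⟨s, hsm, -⟩ := exists_subdiff_inner_eq_of_ne hf x₀ hv
      exact ⟨s, hsm, inner_zero_right s⟩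
    · push_neg at hE
      refine ⟨0, fun x => ?_, inner_zero_right 0⟩
      have hx : x = x₀ := by rw [hE x, hE x₀]
      simp [hx]
  · exact exists_subdiff_inner_eq_of_ne hf x₀ hu

lemma varIneq {f : E → ℝ} (hf : ConvexOn ℝ Set.univ f) {c : ℝ} (hc : 0 ≤ c) {y a : E}
    (ha : IsMinOn (fun x => c * f x + 1/2 * ‖y - x‖^2) Set.univ a) (x : E) :
    ⟪y - a, x - a⟫ ≤ c * (f x - f a) := by
  have hmin := isMinOn_iff.mp ha
  set v := x - a with hv
  have hkey : ∀ t : ℝ, 0 < t → t ≤ 1 →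
      ⟪y - a, v⟫ ≤ c * (f x - f a) + t/2 * ‖v‖^2 := by
    intro t ht ht1
    have h1 : c * f a + 1/2 * ‖y - a‖^2 ≤ c * f (a + t • v) + 1/2 * ‖(y - a) - t • v‖^2 := by
      have := hmin (a + t • v) (Set.mem_univ _)
      simpa [sub_add_eq_sub_sub] using this
    have h2 : f (a + t • v) ≤ (1 - t) * f a + t * f x := by
      have hcomb : (1 - t) • a + t • x = a + t • v := by rw [hv]; module
      have := hf.2 (Set.mem_univ a) (Set.mem_univ x)
        (show (0:ℝ) ≤ 1 - t by linarith) ht.le (show (1 - t) + t = 1 by ring)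
      rw [hcomb] at this
      simpa using this
    have hexp : ‖(y - a) - t • v‖^2
        = ‖y - a‖^2 - 2 * (t * ⟪y - a, v⟫) + t^2 * ‖v‖^2 := by
      rw [norm_sub_sq_real, real_inner_smul_right, norm_smul]
      rw [mul_pow, Real.norm_eq_abs, sq_abs]
    have h3 : c * f (a + t • v) ≤ c * ((1 - t) * f a + t * f x) :=
      mul_le_mul_of_nonneg_left h2 hc
    rw [hexp] at h1
    nlinarith [h1, h3, ht, sq_nonneg t]
  refine le_of_forall_pos_le_add fun ε hε => ?_
  set M := ‖v‖^2 with hM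
  have hM0 : 0 ≤ M := sq_nonneg _
  have ht0 : 0 < min 1 (2*ε/(M+1)) := lt_min one_pos (by positivity)
  have h := hkey _ ht0 (min_le_left _ _)
  have h2 : min 1 (2*ε/(M+1)) ≤ 2*ε/(M+1) := min_le_right _ _
  have h3 : (2*ε/(M+1)) * (M+1) = 2*ε := div_mul_cancel₀ _ (by positivity)
  refine h.trans ?_
  have : min 1 (2*ε/(M+1)) / 2 * M ≤ ε := by nlinarith
  linarith

lemma strongMin {f : E → ℝ} (hf : ConvexOn ℝ Set.univ f) {c : ℝ} (hc : 0 ≤ c) {y a : E}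
    (ha : IsMinOn (fun x => c * f x + 1/2 * ‖y - x‖^2) Set.univ a) (x : E) :
    c * f a + 1/2 * ‖y - a‖^2 + 1/2 * ‖x - a‖^2 ≤ c * f x + 1/2 * ‖y - x‖^2 := by
  have hvi := varIneq hf hc ha x
  have hexp : ‖y - x‖^2 = ‖y - a‖^2 - 2 * ⟪y - a, x - a⟫ + ‖x - a‖^2 := by
    rw [← sub_sub_sub_cancel_right y x a, norm_sub_sq_real]
  rw [hexp]
  linarith

lemma minimizer_dist_le {f : E → ℝ} (hf : ConvexOn ℝ Set.univ f) {c : ℝ} (hc : 0 ≤ c)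
    {y y' a b : E} (ha : IsMinOn (fun x => c * f x + 1/2 * ‖y - x‖^2) Set.univ a)
    (hb : IsMinOn (fun x => c * f x + 1/2 * ‖y' - x‖^2) Set.univ b) :
    ‖a - b‖ ≤ ‖y - y'‖ := by
  have h1 := strongMin hf hc ha b
  have h2 := strongMin hf hc hb a
  have hE1 : ‖y - b‖^2 = ‖y - a‖^2 - 2 * ⟪y - a, b - a⟫ + ‖b - a‖^2 := by
    rw [← sub_sub_sub_cancel_right y b a, norm_sub_sq_real]
  have hE2 : ‖y' - a‖^2 = ‖y' - b‖^2 - 2 * ⟪y' - b, a - b⟫ + ‖a - b‖^2 := by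
    rw [← sub_sub_sub_cancel_right y' a b, norm_sub_sq_real]
  have hip : ⟪y - a, b - a⟫ + ⟪y' - b, a - b⟫ = -⟪y - y', a - b⟫ + ⟪b - a, b - a⟫ := by
    have e1 : y - a = (y - y') + (y' - b) + (b - a) := by abel
    rw [e1, inner_add_left, inner_add_left]
    have e2 : (⟪y' - b, a - b⟫ : ℝ) = -⟪y' - b, b - a⟫ := by
      rw [← inner_neg_right]; congr 1; abel
    rw [e2]
    have e3 : (⟪y - y', b - a⟫ : ℝ) = -⟪y - y', a - b⟫ := by
      rw [← inner_neg_right]; congr 1; abel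
    rw [e3]
    ring
  have hnorm : ‖a - b‖^2 = ‖b - a‖^2 := by rw [norm_sub_rev]
  have hr : ⟪b - a, b - a⟫ = ‖b - a‖^2 := real_inner_self_eq_norm_sq (b - a)
  have hcs : ⟪y - y', a - b⟫ ≤ ‖y - y'‖ * ‖a - b‖ := real_inner_le_norm _ _
  have key : ‖a - b‖^2 ≤ ‖y - y'‖ * ‖a - b‖ := by nlinarith
  rcases eq_or_lt_of_le (norm_nonneg (a - b)) with h0 | h0
  · rw [← h0]; exact norm_nonneg _
  · nlinarith


lemma map_eval_pi {n : ℕ} (i : Fin n) :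
    Measure.map (Function.eval i) (Measure.pi fun _ : Fin n => gaussianReal 0 1)
      = gaussianReal 0 1 := by
  apply Measure.ext fun s hs => ?_
  rw [Measure.map_apply (measurable_pi_apply i) hs]
  have hpre : Function.eval i ⁻¹' s
      = Set.pi Set.univ (Function.update (fun _ : Fin n => (Set.univ : Set ℝ)) i s) := by
    rw [Set.eval_preimage]
  rw [hpre, Measure.pi_pi]
  rw [Fintype.prod_eq_single i (fun j hj => by
    rw [Function.update_of_ne hj]; simp)]
  rw [Function.update_self]

lemma integrable_sq_gaussian : Integrable (fun r : ℝ => r ^ 2) (gaussianReal 0 1) := by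
  rw [gaussianReal_of_var_ne_zero _ one_ne_zero]
  rw [integrable_withDensity_iff (measurable_gaussianPDF _ _)
    (ae_of_all _ fun x => ENNReal.ofReal_lt_top)]
  have base : Integrable (fun x : ℝ => x ^ (2:ℝ) * Real.exp (-(1/2) * x^2)) :=
    integrable_rpow_mul_exp_neg_mul_sq one_half_pos (by norm_num)
  have base' : Integrable (fun x : ℝ => x ^ 2 * Real.exp (-(1/2) * x^2)) := by
    have hfe : (fun x : ℝ => x ^ (2:ℝ) * Real.exp (-(1/2) * x^2))
        = (fun x : ℝ => x ^ (2:ℕ) * Real.exp (-(1/2) * x^2)) := by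
      funext x
      rw [← Real.rpow_natCast x 2]
      norm_num
    rwa [hfe] at base
  refine (base'.const_mul ((Real.sqrt (2 * Real.pi))⁻¹)).congr (ae_of_all _ fun x => ?_)
  simp only [gaussianPDF_def]
  rw [ENNReal.toReal_ofReal (gaussianPDFReal_nonneg _ _ _), gaussianPDFReal]
  push_cast
  rw [show -(x - 0)^2/(2*(1:ℝ)) = -(1/2) * x^2 by ring]
  ring

lemma integrable_normSq_stdGaussian {n : ℕ} :
    Integrable (fun w : EuclideanSpace ℝ (Fin n) => ‖w‖ ^ 2) (stdGaussian n) := by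
  rw [_root_.stdGaussian, integrable_map_measure (g := fun w : EuclideanSpace ℝ (Fin n) => ‖w‖ ^ 2)
    ((continuous_norm.pow 2).aestronglyMeasurable)
    ((EuclideanSpace.equiv (Fin n) ℝ).symm.continuous.measurable.aemeasurable)]
  have heq : ((fun w : EuclideanSpace ℝ (Fin n) => ‖w‖ ^ 2)
      ∘ ⇑(EuclideanSpace.equiv (Fin n) ℝ).symm)
      = fun x : Fin n → ℝ => ∑ i, (x i) ^ 2 := by
    funext x
    simp only [Function.comp_apply]
    rw [EuclideanSpace.norm_eq]
    rw [Real.sq_sqrt (by positivity)]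
    congr 1
    funext i
    simp [sq_abs]
  rw [heq]
  apply integrable_finset_sum
  intro i _
  have hmp : MeasurePreserving (Function.eval i)
      (Measure.pi fun _ : Fin n => gaussianReal 0 1) (gaussianReal 0 1) :=
    ⟨measurable_pi_apply i, map_eval_pi i⟩
  exact (hmp.integrable_comp (by fun_prop)).mpr integrable_sq_gaussian

instance stdGaussian_isProb {n : ℕ} : IsProbabilityMeasure (stdGaussian n) := by
  rw [_root_.stdGaussian]
  exact Measure.isProbabilityMeasure_map
    ((EuclideanSpace.equiv (Fin n) ℝ).symm.continuous.measurable.aemeasurable)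

lemma integrable_norm_stdGaussian {n : ℕ} :
    Integrable (fun w : EuclideanSpace ℝ (Fin n) => ‖w‖) (stdGaussian n) := by
  refine Integrable.mono (integrable_normSq_stdGaussian.add (integrable_const 1))
    (by fun_prop) (ae_of_all _ fun w => ?_)
  simp only [Pi.add_apply]
  rw [Real.norm_eq_abs, abs_of_nonneg (norm_nonneg w), Real.norm_eq_abs,
    abs_of_nonneg (show (0:ℝ) ≤ ‖w‖^2 + 1 by positivity)]
  nlinarith [norm_nonneg w]

lemma integrable_bound_stdGaussian {n : ℕ} (C : ℝ) :
    Integrable (fun w : EuclideanSpace ℝ (Fin n) => (‖w‖ + C) ^ 2) (stdGaussian n) := by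
  have heq : (fun w : EuclideanSpace ℝ (Fin n) => (‖w‖ + C) ^ 2)
      = fun w => ‖w‖^2 + ((2*C) * ‖w‖ + C^2) := by
    funext w; ring
  rw [heq]
  exact integrable_normSq_stdGaussian.add
    ((integrable_norm_stdGaussian.const_mul _).add (integrable_const _))

lemma subdiff_convex (f : E → ℝ) (x₀ : E) : Convex ℝ (subdiff f x₀) := by
  intro s hs t ht a b ha hb hab
  intro x
  have h1 := hs x
  have h2 := ht x
  have hip : ⟪a • s + b • t, x - x₀⟫ = a * ⟪s, x - x₀⟫ + b * ⟪t, x - x₀⟫ := by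
    rw [inner_add_left, real_inner_smul_left, real_inner_smul_left]
  show f x₀ + ⟪a • s + b • t, x - x₀⟫ ≤ f x
  rw [hip]
  have hx : a * f x + b * f x = f x := by rw [← add_mul, hab, one_mul]
  have hx0 : a * f x₀ + b * f x₀ = f x₀ := by rw [← add_mul, hab, one_mul]
  nlinarith [mul_le_mul_of_nonneg_left h1 ha, mul_le_mul_of_nonneg_left h2 hb, hx, hx0]

lemma subdiff_closed (f : E → ℝ) (x₀ : E) : IsClosed (subdiff f x₀) := by
  have h : subdiff f x₀ = ⋂ x, {s : E | f x₀ + ⟪s, x - x₀⟫ ≤ f x} := by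
    ext s; simp only [subdiff, Set.mem_setOf_eq, Set.mem_iInter]
  rw [h]
  exact isClosed_iInter fun x => isClosed_le
    (continuous_const.add (Continuous.inner continuous_id continuous_const)) continuous_const

lemma smul_sub_norm_eq {σ : ℝ} (hσ : 0 < σ) (z u : E) :
    ‖σ⁻¹ • z - u‖^2 = ‖σ • u - z‖^2 / σ^2 := by
  have h1 : σ⁻¹ • z - u = σ⁻¹ • (z - σ • u) := by
    rw [smul_sub, smul_smul, inv_mul_cancel₀ hσ.ne', one_smul]
  rw [h1, norm_smul, Real.norm_eq_abs, abs_of_pos (inv_pos.2 hσ), mul_pow, norm_sub_rev]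
  field_simp

lemma norm_bound {f : E → ℝ} (hf : ConvexOn ℝ Set.univ f) {lam : ℝ} (hlam : 0 ≤ lam)
    {x₀ s₀ : E} (hs₀ : s₀ ∈ subdiff f x₀) {σ : ℝ} (hσ : 0 < σ) (w a : E)
    (hmin : IsMinOn (fun x => σ * lam * f x + 1/2 * ‖(x₀ + σ • w) - x‖^2) Set.univ a) :
    ‖a - x₀‖ ≤ σ * ‖w - lam • s₀‖ := by
  have hvi := varIneq hf (mul_nonneg hσ.le hlam) hmin x₀
  set v := a - x₀ with hv
  have e1 : x₀ + σ • w - a = σ • w - v := by rw [hv]; abel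
  have e2 : x₀ - a = -v := by rw [hv]; abel
  rw [e1, e2] at hvi
  have hip1 : ⟪σ • w - v, -v⟫ = -(σ * ⟪w, v⟫) + ‖v‖^2 := by
    rw [inner_neg_right, inner_sub_left, real_inner_smul_left, real_inner_self_eq_norm_sq]
    ring
  rw [hip1] at hvi
  have hsub := hs₀ a
  have hsub' : σ * lam * (f x₀ - f a) ≤ -(σ * (lam * ⟪s₀, v⟫)) := by
    have h := mul_le_mul_of_nonneg_left
      (show f x₀ - f a ≤ -⟪s₀, v⟫ by rw [← hv] at hsub; linarith)
      (mul_nonneg hσ.le hlam)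
    nlinarith [h]
  have hip2 : ⟪w - lam • s₀, v⟫ = ⟪w, v⟫ - lam * ⟪s₀, v⟫ := by
    rw [inner_sub_left, real_inner_smul_left]
  have hcs : ⟪w - lam • s₀, v⟫ ≤ ‖w - lam • s₀‖ * ‖v‖ := real_inner_le_norm _ _
  have hkey : ‖v‖^2 ≤ σ * (‖w - lam • s₀‖ * ‖v‖) := by nlinarith [hvi, hsub']
  nlinarith [hkey, norm_nonneg v, mul_nonneg hσ.le (norm_nonneg (w - lam • s₀))]

lemma tendsto_pointwise {E : Type*} [NormedAddCommGroup E] [InnerProductSpace ℝ E]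
    [CompleteSpace E] [FiniteDimensional ℝ E] {f : E → ℝ} (hf : ConvexOn ℝ Set.univ f)
    {lam : ℝ} (hlam : 0 ≤ lam) (x₀ : E) (xstar : ℝ → E → E)
    (hxstar : ∀ σ : ℝ, 0 < σ → ∀ w,
      IsMinOn (fun x => σ * lam * f x + (1 / 2) * ‖(x₀ + σ • w) - x‖ ^ 2)
        Set.univ (xstar σ w)) (w : E) :
    Tendsto (fun σ : ℝ => ‖xstar σ w - x₀‖ ^ 2 / σ ^ 2) (nhdsWithin 0 (Set.Ioi 0))
      (nhds (Metric.infDist w (lam • subdiff f x₀) ^ 2)) := by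
  set K := lam • subdiff f x₀ with hK
  obtain ⟨s₀, hs₀, -⟩ := exists_subdiff_inner_eq hf x₀ 0
  have Kne : K.Nonempty := ⟨lam • s₀, Set.smul_mem_smul_set hs₀⟩
  have Kconv : Convex ℝ K := (subdiff_convex f x₀).smul lam
  have Kcl : IsClosed K := by
    rcases eq_or_lt_of_le hlam with h0 | hpos
    · rw [hK, ← h0, Set.zero_smul_set ⟨s₀, hs₀⟩]
      exact isClosed_singleton
    · exact (subdiff_closed f x₀).smul_of_ne_zero hpos.ne'
  obtain ⟨p, hpK, hpdist⟩ := exists_norm_eq_iInf_of_complete_convex Kne Kcl.isComplete Kconv w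
  have hchar := (norm_eq_iInf_iff_real_inner_le_zero Kconv hpK).mp hpdist
  have hinf : Metric.infDist w K = ‖w - p‖ := by
    rw [Metric.infDist_eq_iInf]
    simp_rw [dist_eq_norm]
    exact hpdist.symm
  set u := w - p with hu
  obtain ⟨sstar, hsstar, hps⟩ := Set.mem_smul_set.mp hpK
  -- key quantitative estimate
  have key : ∀ σ : ℝ, 0 < σ →
      ‖σ⁻¹ • (xstar σ w - x₀) - u‖^2 ≤ lam * slp f x₀ u σ - ⟪u, p⟫ := by
    intro σ hσ
    have hminσ := hxstar σ hσ w
    set a := xstar σ w with hadef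
    set v := a - x₀ with hv
    have hsm := strongMin hf (mul_nonneg hσ.le hlam) hminσ (x₀ + σ • u)
    have e1 : x₀ + σ • w - a = σ • w - v := by rw [hv]; abel
    have e2 : x₀ + σ • u - a = σ • u - v := by rw [hv]; abel
    have e3 : x₀ + σ • w - (x₀ + σ • u) = σ • p := by rw [hu]; module
    rw [e1, e2, e3] at hsm
    have E1 : ‖σ • w - v‖^2 = σ^2 * ‖w‖^2 - 2 * (σ * ⟪w, v⟫) + ‖v‖^2 := by
      rw [norm_sub_sq_real, norm_smul, real_inner_smul_left, Real.norm_eq_abs, mul_pow, sq_abs]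
    have E2 : ‖σ • u - v‖^2 = σ^2 * ‖u‖^2 - 2 * (σ * ⟪u, v⟫) + ‖v‖^2 := by
      rw [norm_sub_sq_real, norm_smul, real_inner_smul_left, Real.norm_eq_abs, mul_pow, sq_abs]
    have E3 : ‖σ • p‖^2 = σ^2 * ‖p‖^2 := by
      rw [norm_smul, Real.norm_eq_abs, mul_pow, sq_abs]
    have hw : w = u + p := by rw [hu]; abel
    have E5 : ‖w‖^2 = ‖u‖^2 + 2 * ⟪u, p⟫ + ‖p‖^2 := by
      rw [hw, norm_add_sq_real]
    have E5' : σ^2 * ‖w‖^2 = σ^2 * ‖u‖^2 + 2 * (σ^2 * ⟪u, p⟫) + σ^2 * ‖p‖^2 := by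
      rw [E5]; ring
    have E7 : σ * lam * f (x₀ + σ • u) = σ * lam * f x₀ + σ^2 * lam * slp f x₀ u σ := by
      rw [slp]
      field_simp
      ring
    have E8 : σ * ⟪w, v⟫ = σ * ⟪u, v⟫ + σ * ⟪p, v⟫ := by
      rw [hw, inner_add_left]; ring
    have hsub := hsstar a
    rw [← hv] at hsub
    have hsub' : σ * lam * f x₀ + σ * ⟪p, v⟫ ≤ σ * lam * f a := by
      have h := mul_le_mul_of_nonneg_left hsub (mul_nonneg hσ.le hlam)
      have hips : σ * ⟪p, v⟫ = σ * lam * ⟪sstar, v⟫ := by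
        rw [← hps, real_inner_smul_left]; ring
      nlinarith [h, hips]
    -- reduce goal
    rw [E1, E2, E3, E7] at hsm
    rw [smul_sub_norm_eq hσ v u, div_le_iff₀ (by positivity), E2]
    linarith [hsm, hsub', E5', E8]
  -- eventual smallness
  have hdist : ∀ ε > (0:ℝ), ∀ᶠ σ in nhdsWithin (0:ℝ) (Set.Ioi 0),
      ‖σ⁻¹ • (xstar σ w - x₀) - u‖^2 < ε := by
    intro ε hε
    have hsup : lam * dirD f x₀ u ≤ ⟪u, p⟫ := by
      obtain ⟨su, hsu, hsueq⟩ := exists_subdiff_inner_eq hf x₀ u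
      have hmem : lam • su ∈ K := Set.smul_mem_smul_set hsu
      have hch := hchar _ hmem
      rw [inner_sub_right, real_inner_smul_right] at hch
      rw [← hsueq, real_inner_comm u su]
      linarith [hch]
    have hex : ∃ σ₁ > (0:ℝ), lam * slp f x₀ u σ₁ < ⟪u, p⟫ + ε := by
      rcases eq_or_lt_of_le hlam with h0 | hpos
      · refine ⟨1, one_pos, ?_⟩
        rw [← h0] at hsup ⊢
        simp only [zero_mul] at hsup ⊢
        linarith
      · obtain ⟨_, ⟨σ₁, hσ₁, rfl⟩, hlt⟩ := exists_lt_of_csInf_lt (slp_nonemptyIm f x₀ u)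
          (show dirD f x₀ u < dirD f x₀ u + ε / lam by
            have : 0 < ε / lam := div_pos hε hpos
            linarith)
        rw [Set.mem_Ioi] at hσ₁
        refine ⟨σ₁, hσ₁, ?_⟩
        have := mul_lt_mul_of_pos_left hlt hpos
        rw [mul_add, mul_div_cancel₀ _ hpos.ne'] at this
        linarith
    obtain ⟨σ₁, hσ₁, hσ₁lt⟩ := hex
    filter_upwards [Ioc_mem_nhdsGT_of_mem (Set.left_mem_Ico.2 hσ₁)] with σ hσ
    have h1 := key σ hσ.1
    have h3 : lam * slp f x₀ u σ ≤ lam * slp f x₀ u σ₁ :=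
      mul_le_mul_of_nonneg_left (slp_mono hf x₀ u hσ.1 hσ.2) hlam
    linarith
  have hlim2 : Tendsto (fun σ : ℝ => ‖σ⁻¹ • (xstar σ w - x₀) - u‖^2)
      (nhdsWithin 0 (Set.Ioi 0)) (nhds 0) := by
    rw [Metric.tendsto_nhds]
    intro ε hε
    filter_upwards [hdist ε hε] with σ h
    rw [Real.dist_eq, sub_zero, abs_of_nonneg (by positivity)]
    exact h
  have hlim3 : Tendsto (fun σ : ℝ => σ⁻¹ • (xstar σ w - x₀))
      (nhdsWithin 0 (Set.Ioi 0)) (nhds u) := by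
    rw [tendsto_iff_norm_sub_tendsto_zero]
    refine Tendsto.congr (fun σ => Real.sqrt_sq (norm_nonneg _)) ?_
    have h := (Real.continuous_sqrt.tendsto 0).comp hlim2
    simpa [Function.comp_def] using h
  have hlim4 : Tendsto (fun σ : ℝ => ‖σ⁻¹ • (xstar σ w - x₀)‖^2)
      (nhdsWithin 0 (Set.Ioi 0)) (nhds (‖u‖^2)) :=
    (((continuous_pow 2).comp continuous_norm).tendsto u).comp hlim3
  rw [hinf]
  refine hlim4.congr' ?_
  filter_upwards [self_mem_nhdsWithin] with σ hσ
  rw [Set.mem_Ioi] at hσ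
  rw [norm_smul, Real.norm_eq_abs, abs_of_pos (inv_pos.2 hσ), mul_pow]
  field_simp

end AuxProofs

/-- Stochastic lower bound: NMSE in the small-noise limit.
For convex `f`, `λ ≥ 0` and standard Gaussian noise, the NMSE of the proximity
operator converges to `D(λ∂f(x₀))` as `σ → 0`. -/
theorem statement11 {n : ℕ} (f : EuclideanSpace ℝ (Fin n) → ℝ)
    (hf : ConvexOn ℝ Set.univ f) (x₀ : EuclideanSpace ℝ (Fin n))
    (lam : ℝ) (hlam : 0 ≤ lam)
    (xstar : ℝ → EuclideanSpace ℝ (Fin n) → EuclideanSpace ℝ (Fin n))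
    (hxstar : ∀ σ : ℝ, 0 < σ → ∀ w,
      IsMinOn (fun x => σ * lam * f x + (1 / 2) * ‖(x₀ + σ • w) - x‖ ^ 2)
        Set.univ (xstar σ w)) :
    Tendsto (fun σ : ℝ => (∫ w, ‖xstar σ w - x₀‖ ^ 2 ∂(stdGaussian n)) / σ ^ 2)
      (nhdsWithin 0 (Set.Ioi 0)) (nhds (msd n (lam • subdiff f x₀))) := by
  obtain ⟨s₀, hs₀, -⟩ := exists_subdiff_inner_eq hf x₀ 0
  set C := lam * ‖s₀‖ with hC
  have hC0 : 0 ≤ C := mul_nonneg hlam (norm_nonneg _)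
  have hmain : Tendsto (fun σ : ℝ => ∫ w, ‖xstar σ w - x₀‖ ^ 2 / σ ^ 2 ∂(stdGaussian n))
      (nhdsWithin 0 (Set.Ioi 0)) (nhds (msd n (lam • subdiff f x₀))) := by
    have hmsd : msd n (lam • subdiff f x₀)
        = ∫ w, (Metric.infDist w (lam • subdiff f x₀)) ^ 2 ∂(stdGaussian n) := rfl
    rw [hmsd]
    refine tendsto_integral_filter_of_dominated_convergence
      (fun w => (‖w‖ + C) ^ 2) ?_ ?_ ?_ ?_
    · filter_upwards [self_mem_nhdsWithin] with σ hσ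
      rw [Set.mem_Ioi] at hσ
      have hdistb : ∀ w w' : EuclideanSpace ℝ (Fin n),
          dist (xstar σ w) (xstar σ w') ≤ σ * dist w w' := by
        intro w w'
        rw [dist_eq_norm, dist_eq_norm]
        have h := minimizer_dist_le hf (mul_nonneg hσ.le hlam) (hxstar σ hσ w) (hxstar σ hσ w')
        refine h.trans ?_
        rw [show (x₀ + σ • w) - (x₀ + σ • w') = σ • (w - w') by module]
        rw [norm_smul, Real.norm_eq_abs, abs_of_pos hσ]
      have hlip : Continuous fun w : EuclideanSpace ℝ (Fin n) => xstar σ w :=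
        (LipschitzWith.of_dist_le_mul (K := ⟨σ, hσ.le⟩) (fun w w' => by
          exact hdistb w w')).continuous
      exact (((hlip.sub continuous_const).norm.pow 2).div_const _).aestronglyMeasurable
    · filter_upwards [self_mem_nhdsWithin] with σ hσ
      rw [Set.mem_Ioi] at hσ
      refine ae_of_all _ fun w => ?_
      have hb := norm_bound hf hlam hs₀ hσ w (xstar σ w) (hxstar σ hσ w)
      rw [Real.norm_eq_abs, abs_of_nonneg (by positivity)]
      have h3 : ‖w - lam • s₀‖ ≤ ‖w‖ + C := by
        refine (norm_sub_le _ _).trans ?_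
        rw [norm_smul, Real.norm_eq_abs, abs_of_nonneg hlam, hC]
      have h4 : ‖w - lam • s₀‖ ^ 2 ≤ (‖w‖ + C) ^ 2 :=
        pow_le_pow_left₀ (norm_nonneg _) h3 2
      rw [div_le_iff₀ (by positivity)]
      nlinarith [hb, h4, norm_nonneg (xstar σ w - x₀), norm_nonneg (w - lam • s₀),
        sq_nonneg σ, hσ]
    · exact integrable_bound_stdGaussian C
    · exact ae_of_all _ fun w => tendsto_pointwise hf hlam x₀ xstar hxstar w
  have hfe : (fun σ : ℝ => (∫ w, ‖xstar σ w - x₀‖ ^ 2 ∂(stdGaussian n)) / σ ^ 2)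
      = fun σ : ℝ => ∫ w, ‖xstar σ w - x₀‖ ^ 2 / σ ^ 2 ∂(stdGaussian n) := by
    funext σ
    rw [integral_div]
  rw [hfe]
  exact hmain
end

section
/- Let A ∈ ℝ^{m×n} satisfy AAᵀ = I_m, let C ⊆ ℝⁿ be a nonempty, closed and convex set, and let x₀ ∈ C. Define AC = {Ax : x ∈ C} and 𝒞(x₀, Aᵀ) = T_C(x₀)* ∩ Range(Aᵀ). Then the polar of the tangent cone of AC at Ax₀ satisfies T_{AC}(Ax₀)* = A·𝒞(x₀, Aᵀ), where A·S = {As : s ∈ S}. -/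
open MeasureTheory ProbabilityTheory Filter Topology Metric
open scoped RealInnerProductSpace ENNReal Pointwise Matrix

section aux16

variable {E' : Type*} [NormedAddCommGroup E'] [InnerProductSpace ℝ E']

lemma polarCone_closure (S : Set E') : polarCone (closure S) = polarCone S := by
  ext v
  constructor
  · exact fun h x hx => h x (subset_closure hx)
  · intro h x hx
    have hcl : closure S ⊆ {x : E' | ⟪v, x⟫ ≤ 0} :=
      closure_minimal h (isClosed_le (Continuous.inner continuous_const continuous_id)
        continuous_const)
    exact hcl hx

lemma matVec_adj16 {m n : ℕ} (A : Matrix (Fin m) (Fin n) ℝ)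
    (x : EuclideanSpace ℝ (Fin n)) (y : EuclideanSpace ℝ (Fin m)) :
    ⟪matVec A x, y⟫ = ⟪x, matVec Aᵀ y⟫ := by
  simp only [matVec]
  simp [PiLp.inner_apply, RCLike.inner_apply, Matrix.mulVec, dotProduct,
    Finset.sum_mul, Finset.mul_sum]
  rw [Finset.sum_comm]
  congr 1; ext i; congr 1; ext j; ring

lemma matVec_add16 {m n : ℕ} (A : Matrix (Fin m) (Fin n) ℝ)
    (x y : EuclideanSpace ℝ (Fin n)) :
    matVec A (x + y) = matVec A x + matVec A y := by
  simp [matVec, Matrix.mulVec_add]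

lemma matVec_sub16 {m n : ℕ} (A : Matrix (Fin m) (Fin n) ℝ)
    (x y : EuclideanSpace ℝ (Fin n)) :
    matVec A (x - y) = matVec A x - matVec A y := by
  simp [matVec, Matrix.mulVec_sub]

lemma matVec_smul16 {m n : ℕ} (A : Matrix (Fin m) (Fin n) ℝ) (c : ℝ)
    (x : EuclideanSpace ℝ (Fin n)) :
    matVec A (c • x) = c • matVec A x := by
  simp [matVec, Matrix.mulVec_smul]

lemma coneOf_image16 {m n : ℕ} (A : Matrix (Fin m) (Fin n) ℝ)
    (S : Set (EuclideanSpace ℝ (Fin n))) :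
    coneOf (matVec A '' S) = matVec A '' coneOf S := by
  ext y
  simp only [coneOf, Set.mem_image, Set.mem_setOf_eq]
  constructor
  · rintro ⟨c, hc, x, ⟨s, hs, rfl⟩, rfl⟩
    exact ⟨c • s, ⟨c, hc, s, hs, rfl⟩, (matVec_smul16 A c s)⟩
  · rintro ⟨x, ⟨c, hc, s, hs, rfl⟩, rfl⟩
    exact ⟨c, hc, matVec A s, ⟨s, hs, rfl⟩, matVec_smul16 A c s⟩

lemma polarCone_image16 {m n : ℕ} (A : Matrix (Fin m) (Fin n) ℝ)
    (K : Set (EuclideanSpace ℝ (Fin n))) :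
    polarCone (matVec A '' K) = matVec Aᵀ ⁻¹' polarCone K := by
  ext v
  constructor
  · intro h x hx
    have h1 := h (matVec A x) ⟨x, hx, rfl⟩
    rw [real_inner_comm, matVec_adj16, real_inner_comm] at h1
    exact h1
  · rintro h y ⟨x, hx, rfl⟩
    rw [real_inner_comm, matVec_adj16, real_inner_comm]
    exact h x hx

end aux16

/-- Tangent cone of the image of a convex set under a partial unitary.
If `AAᵀ = I_m`, `C` is nonempty closed convex and `x₀ ∈ C`, then
`T_{AC}(Ax₀)* = A · (T_C(x₀)* ∩ Range(Aᵀ))`. -/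
theorem statement16 {m n : ℕ} (A : Matrix (Fin m) (Fin n) ℝ) (hA : A * Aᵀ = 1)
    (C : Set (EuclideanSpace ℝ (Fin n)))
    (hCne : C.Nonempty) (hCcl : IsClosed C) (hCconv : Convex ℝ C)
    (x₀ : EuclideanSpace ℝ (Fin n)) (hx₀ : x₀ ∈ C) :
    polarCone (tangentConeOf (matVec A '' C) (matVec A x₀)) =
      matVec A '' (polarCone (tangentConeOf C x₀) ∩ Set.range (matVec Aᵀ)) := by
  have hAAT : ∀ y : EuclideanSpace ℝ (Fin m), matVec A (matVec Aᵀ y) = y := by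
    intro y
    change WithLp.toLp 2 (A *ᵥ (Aᵀ *ᵥ y.ofLp)) = y
    rw [Matrix.mulVec_mulVec, hA, Matrix.one_mulVec]
  have hfeas : feasible (matVec A '' C) (matVec A x₀) = matVec A '' feasible C x₀ := by
    ext z
    constructor
    · rintro ⟨c, hcC, hc⟩
      refine ⟨c - x₀, ?_, ?_⟩
      · show x₀ + (c - x₀) ∈ C
        simpa using hcC
      · rw [matVec_sub16, hc]; abel
    · rintro ⟨w, hw, rfl⟩
      exact ⟨x₀ + w, hw, matVec_add16 A x₀ w⟩
  have hpre : matVec Aᵀ ⁻¹' polarCone (tangentConeOf C x₀) =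
      matVec A '' (polarCone (tangentConeOf C x₀) ∩ Set.range (matVec Aᵀ)) := by
    ext v
    constructor
    · intro hv
      exact ⟨matVec Aᵀ v, ⟨hv, ⟨v, rfl⟩⟩, hAAT v⟩
    · rintro ⟨w, ⟨hwP, u, rfl⟩, rfl⟩
      show matVec Aᵀ (matVec A (matVec Aᵀ u)) ∈ polarCone (tangentConeOf C x₀)
      rw [hAAT u]
      exact hwP
  rw [tangentConeOf, polarCone_closure, hfeas, coneOf_image16, polarCone_image16,
    ← polarCone_closure (coneOf (feasible C x₀)), ← tangentConeOf, hpre]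
end

section
/- Let K ⊆ ℝⁿ be a closed convex set with 0 ∈ K, let z ∈ ℝⁿ, and let 0 < α < 1. Write p₁ = Proj(z, K) and p₂ = Proj(αz, K). Then ‖p₂‖₂ ≥ α‖p₁‖₂, and moreover ‖p₂‖₂/α ≤ ‖Proj(z, T_K(0))‖₂; in particular, the function g(t) = ‖Proj(t·w, K)‖₂/t (for a unit vector w, extended by g(0) = ‖Proj(w, T_K(0))‖₂) is continuous and nonincreasing on [0, ∞). -/
open MeasureTheory ProbabilityTheory Filter Topology Metric
open scoped RealInnerProductSpace ENNReal Pointwise Matrix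

section AuxProj

open Filter Metric Set

variable {E : Type*} [NormedAddCommGroup E] [InnerProductSpace ℝ E] [ProperSpace E]

private lemma projSet_spec {K : Set E} (hcl : IsClosed K) (hne : K.Nonempty) (x : E) :
    projSet K x ∈ K ∧ dist x (projSet K x) = Metric.infDist x K := by
  obtain ⟨y, hyK, hy⟩ := hcl.exists_infDist_eq_dist hne x
  have h : ∃ y ∈ K, dist x y = Metric.infDist x K := ⟨y, hyK, hy.symm⟩
  rw [projSet, dif_pos h]
  exact ⟨h.choose_spec.1, h.choose_spec.2⟩

private lemma projSet_inner_nonpos {K : Set E} (hcl : IsClosed K) (hconv : Convex ℝ K)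
    (hne : K.Nonempty) (x : E) {w : E} (hw : w ∈ K) :
    ⟪x - projSet K x, w - projSet K x⟫ ≤ 0 := by
  obtain ⟨hmem, hdist⟩ := projSet_spec hcl hne x
  have hinf : ‖x - projSet K x‖ = ⨅ w : K, ‖x - w‖ := by
    rw [← dist_eq_norm, hdist, Metric.infDist_eq_iInf]
    congr 1
    ext y
    rw [dist_eq_norm]
  exact (norm_eq_iInf_iff_real_inner_le_zero hconv hmem).mp hinf w hw

private lemma projSet_continuous {K : Set E} (hcl : IsClosed K) (hconv : Convex ℝ K)
    (hne : K.Nonempty) : Continuous (projSet K) := by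
  refine (LipschitzWith.of_dist_le_mul (K := 1) (f := projSet K) fun x y => ?_).continuous
  set px := projSet K x
  set py := projSet K y
  have h1 : ⟪x - px, py - px⟫ ≤ 0 :=
    projSet_inner_nonpos hcl hconv hne x (projSet_spec hcl hne y).1
  have h2 : ⟪y - py, px - py⟫ ≤ 0 :=
    projSet_inner_nonpos hcl hconv hne y (projSet_spec hcl hne x).1
  have e : ⟪x - y, px - py⟫ - ⟪px - py, px - py⟫ =
      -⟪x - px, py - px⟫ - ⟪y - py, px - py⟫ := by
    simp only [inner_sub_left, inner_sub_right]
    ring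
  have key : ‖px - py‖ ^ 2 ≤ ⟪x - y, px - py⟫ := by
    have hself : ⟪px - py, px - py⟫ = ‖px - py‖ ^ 2 := real_inner_self_eq_norm_sq _
    linarith [e, h1, h2, hself.symm.le, hself.le]
  have cs : ⟪x - y, px - py⟫ ≤ ‖x - y‖ * ‖px - py‖ := real_inner_le_norm _ _
  rw [dist_eq_norm, dist_eq_norm, NNReal.coe_one, one_mul]
  rcases (eq_or_lt_of_le (norm_nonneg (px - py))).imp_left Eq.symm with h0 | hpos
  · rw [h0]; exact norm_nonneg _
  · nlinarith [key, cs]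

private lemma norm_projSet_smul_ge {K : Set E} (hcl : IsClosed K) (hconv : Convex ℝ K)
    (hne : K.Nonempty) (x : E) {β : ℝ} (hβ0 : 0 < β) (hβ1 : β ≤ 1) :
    β * ‖projSet K x‖ ≤ ‖projSet K (β • x)‖ := by
  set p := projSet K x
  set q := projSet K (β • x)
  have hpK : p ∈ K := (projSet_spec hcl hne x).1
  have hqK : q ∈ K := (projSet_spec hcl hne (β • x)).1
  have h1 : ⟪β • x - q, p - q⟫ ≤ 0 := projSet_inner_nonpos hcl hconv hne _ hpK
  have h2 : ⟪x - p, q - p⟫ ≤ 0 := projSet_inner_nonpos hcl hconv hne _ hqK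
  have e1 : ⟪β • x - q, p - q⟫ = β * ⟪x, p⟫ - β * ⟪x, q⟫ - ⟪q, p⟫ + ⟪q, q⟫ := by
    simp only [inner_sub_left, inner_sub_right, real_inner_smul_left]
    ring
  have e2 : ⟪x - p, q - p⟫ = ⟪x, q⟫ - ⟪x, p⟫ - ⟪p, q⟫ + ⟪p, p⟫ := by
    simp only [inner_sub_left, inner_sub_right]
    ring
  have h2' : β * ⟪x - p, q - p⟫ ≤ 0 := mul_nonpos_of_nonneg_of_nonpos hβ0.le h2
  have hcomm : ⟪q, p⟫ = ⟪p, q⟫ := real_inner_comm _ _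
  have hq2 : ⟪q, q⟫ = ‖q‖ ^ 2 := real_inner_self_eq_norm_sq _
  have hp2 : ⟪p, p⟫ = ‖p‖ ^ 2 := real_inner_self_eq_norm_sq _
  have key : ‖q‖ ^ 2 + β * ‖p‖ ^ 2 ≤ (1 + β) * ⟪p, q⟫ := by
    rw [e1] at h1
    rw [e2] at h2'
    nlinarith [h1, h2']
  have cs : ⟪p, q⟫ ≤ ‖p‖ * ‖q‖ := real_inner_le_norm _ _
  by_contra hcon
  push_neg at hcon
  have hq0 : 0 ≤ ‖q‖ := norm_nonneg _
  have hp0 : 0 ≤ ‖p‖ := norm_nonneg _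
  have hlt : ‖q‖ < ‖p‖ := lt_of_lt_of_le hcon (by nlinarith)
  nlinarith [mul_pos (sub_pos.2 hlt) (sub_pos.2 hcon), key, cs]

private lemma norm_projSet_div_antitone {K : Set E} (hcl : IsClosed K) (hconv : Convex ℝ K)
    (hne : K.Nonempty) (z : E) {s t : ℝ} (hs : 0 < s) (hst : s ≤ t) :
    ‖projSet K (t • z)‖ / t ≤ ‖projSet K (s • z)‖ / s := by
  have ht : 0 < t := hs.trans_le hst
  have hβ : 0 < s / t := div_pos hs ht
  have hβ1 : s / t ≤ 1 := div_le_one_of_le₀ hst ht.le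
  have h := norm_projSet_smul_ge hcl hconv hne (t • z) hβ hβ1
  rw [smul_smul, div_mul_cancel₀ _ ht.ne'] at h
  rw [div_le_div_iff₀ ht hs]
  have h' := mul_le_mul_of_nonneg_right h ht.le
  have e : s / t * ‖projSet K (t • z)‖ * t = ‖projSet K (t • z)‖ * s := by
    field_simp
  rw [e] at h'
  nlinarith [h', hs]

private lemma coneOf_convex {K : Set E} (hconv : Convex ℝ K) (h0 : (0 : E) ∈ K) :
    Convex ℝ (coneOf K) := by
  rintro y1 ⟨c1, hc1, x1, hx1, rfl⟩ y2 ⟨c2, hc2, x2, hx2, rfl⟩ a b ha hb hab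
  by_cases hγ : a * c1 + b * c2 = 0
  · have h1 : a * c1 = 0 := by nlinarith [mul_nonneg ha hc1, mul_nonneg hb hc2]
    have h2 : b * c2 = 0 := by nlinarith [mul_nonneg ha hc1, mul_nonneg hb hc2]
    refine ⟨0, le_rfl, 0, h0, ?_⟩
    rw [smul_smul, smul_smul, h1, h2]
    simp
  · have hγpos : 0 < a * c1 + b * c2 :=
      lt_of_le_of_ne (by positivity) (Ne.symm hγ)
    refine ⟨a * c1 + b * c2, hγpos.le,
      (a * c1 / (a * c1 + b * c2)) • x1 + (b * c2 / (a * c1 + b * c2)) • x2,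
      hconv hx1 hx2 (by positivity) (by positivity) (by field_simp), ?_⟩
    rw [smul_add, smul_smul, smul_smul, smul_smul, smul_smul,
      mul_div_cancel₀ _ hγ, mul_div_cancel₀ _ hγ]

private lemma tangent_facts {K : Set E} (hconv : Convex ℝ K) (h0 : (0 : E) ∈ K) :
    tangentConeOf K 0 = closure (coneOf K) := by
  have : feasible K 0 = K := by
    ext x
    simp [feasible]
  rw [tangentConeOf, this]

private lemma tendsto_norm_projSet_div {K : Set E} (hcl : IsClosed K) (hconv : Convex ℝ K)
    (h0K : (0 : E) ∈ K) (z : E) :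
    Tendsto (fun t : ℝ => ‖projSet K (t • z)‖ / t) (𝓝[>] (0 : ℝ))
      (𝓝 ‖projSet (tangentConeOf K 0) z‖) := by
  have hne : K.Nonempty := ⟨0, h0K⟩
  have hTeq : tangentConeOf K 0 = closure (coneOf K) := tangent_facts hconv h0K
  set T := tangentConeOf K 0 with hT
  have hTcl : IsClosed T := hTeq ▸ isClosed_closure
  have hTconv : Convex ℝ T := hTeq ▸ (coneOf_convex hconv h0K).closure
  have h0cone : (0 : E) ∈ coneOf K := ⟨0, le_rfl, 0, h0K, by simp⟩
  have hTne : T.Nonempty := ⟨0, hTeq ▸ subset_closure h0cone⟩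
  set p := projSet T z with hpdef
  have hpT : p ∈ T := (projSet_spec hTcl hTne z).1
  have hpd : dist z p = Metric.infDist z T := (projSet_spec hTcl hTne z).2
  set d := Metric.infDist z T with hd
  set q : ℝ → E := fun t => t⁻¹ • projSet K (t • z) with hqdef
  set f : ℝ → ℝ := fun t => Metric.infDist (t • z) K / t with hfdef
  have hqT : ∀ t ∈ Set.Ioi (0 : ℝ), q t ∈ T := by
    intro t ht
    exact hTeq ▸ subset_closure
      ⟨t⁻¹, le_of_lt (inv_pos.2 ht), _, (projSet_spec hcl hne (t • z)).1, rfl⟩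
  have hzq : ∀ t ∈ Set.Ioi (0 : ℝ), ‖z - q t‖ = f t := by
    intro t ht
    have ht0 : (t : ℝ) ≠ 0 := ne_of_gt ht
    have hrw : z - q t = t⁻¹ • (t • z - projSet K (t • z)) := by
      rw [smul_sub, smul_smul, inv_mul_cancel₀ ht0, one_smul]
    rw [hrw, norm_smul, norm_inv, Real.norm_eq_abs, abs_of_pos ht, ← dist_eq_norm,
      (projSet_spec hcl hne (t • z)).2, inv_mul_eq_div]
  have hlow : ∀ t ∈ Set.Ioi (0 : ℝ), d ≤ f t := by
    intro t ht
    calc d ≤ dist z (q t) := Metric.infDist_le_dist_of_mem (hqT t ht)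
    _ = ‖z - q t‖ := dist_eq_norm _ _
    _ = f t := hzq t ht
  have hf : Tendsto f (𝓝[>] (0 : ℝ)) (𝓝 d) := by
    rw [Metric.tendsto_nhds]
    intro ε hε
    have hcne : (coneOf K).Nonempty := ⟨0, h0cone⟩
    have hdc : Metric.infDist z (coneOf K) = d := by
      rw [hd, hTeq, Metric.infDist_closure]
    have hlt : Metric.infDist z (coneOf K) < d + ε := by rw [hdc]; linarith
    obtain ⟨y, hy, hydist⟩ := (Metric.infDist_lt_iff hcne).mp hlt
    obtain ⟨c, hc, k, hk, rfl⟩ := hy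
    filter_upwards [Ioc_mem_nhdsGT (show (0 : ℝ) < (c + 1)⁻¹ by positivity)]
      with t htmem
    obtain ⟨ht0, htle⟩ := htmem
    have htc1 : t * c ≤ 1 := by
      have h1 : t * c ≤ (c + 1)⁻¹ * c := mul_le_mul_of_nonneg_right htle hc
      have h2 : (c + 1)⁻¹ * c ≤ 1 := by
        rw [← div_eq_inv_mul]
        exact div_le_one_of_le₀ (by linarith) (by positivity)
      linarith
    have hmemK : (t * c) • k ∈ K :=
      hconv.smul_mem_of_zero_mem h0K hk ⟨by positivity, htc1⟩
    have hup : Metric.infDist (t • z) K ≤ t * dist z (c • k) := by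
      calc Metric.infDist (t • z) K ≤ dist (t • z) ((t * c) • k) :=
          Metric.infDist_le_dist_of_mem hmemK
      _ = ‖t • z - (t * c) • k‖ := dist_eq_norm _ _
      _ = ‖t • (z - c • k)‖ := by rw [smul_sub, mul_smul]
      _ = t * ‖z - c • k‖ := by rw [norm_smul, Real.norm_eq_abs, abs_of_pos ht0]
      _ = t * dist z (c • k) := by rw [dist_eq_norm]
    have h1 : f t ≤ dist z (c • k) := by
      rw [hfdef]
      dsimp only
      rw [div_le_iff₀ ht0]
      nlinarith [hup]
    have h2 : d ≤ f t := hlow t ht0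
    rw [Real.dist_eq, abs_lt]
    constructor <;> nlinarith [hydist, h1, h2]
  have hqp : ∀ t ∈ Set.Ioi (0 : ℝ), ‖q t - p‖ ^ 2 ≤ f t ^ 2 - d ^ 2 := by
    intro t ht
    have hvi : ⟪z - p, q t - p⟫ ≤ 0 :=
      projSet_inner_nonpos hTcl hTconv hTne z (hqT t ht)
    have hnormz : ‖z - p‖ = d := by rw [← dist_eq_norm, hpd]
    have hexp : ‖z - q t‖ ^ 2 =
        ‖z - p‖ ^ 2 - 2 * ⟪z - p, q t - p⟫ + ‖q t - p‖ ^ 2 := by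
      have e : z - q t = (z - p) - (q t - p) := by abel
      rw [e, norm_sub_sq_real]
    rw [hzq t ht, hnormz] at hexp
    linarith [hvi, hexp.ge, hexp.le]
  have hqtend : Tendsto (fun t => ‖q t - p‖) (𝓝[>] (0 : ℝ)) (𝓝 0) := by
    have h1 : Tendsto (fun t => f t ^ 2 - d ^ 2) (𝓝[>] (0 : ℝ)) (𝓝 0) := by
      have := (hf.pow 2).sub_const (d ^ 2)
      simpa using this
    have hub : Tendsto (fun t => Real.sqrt (f t ^ 2 - d ^ 2)) (𝓝[>] (0 : ℝ)) (𝓝 0) := by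
      have := (Real.continuous_sqrt.tendsto 0).comp h1
      simpa [Function.comp_def] using this
    refine squeeze_zero' (Eventually.of_forall fun t => norm_nonneg _) ?_ hub
    filter_upwards [self_mem_nhdsWithin] with t ht
    calc ‖q t - p‖ = Real.sqrt (‖q t - p‖ ^ 2) := (Real.sqrt_sq (norm_nonneg _)).symm
    _ ≤ Real.sqrt (f t ^ 2 - d ^ 2) := Real.sqrt_le_sqrt (hqp t ht)
  have hqten : Tendsto q (𝓝[>] (0 : ℝ)) (𝓝 p) := by
    rw [tendsto_iff_norm_sub_tendsto_zero]
    exact hqtend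
  have hnq : Tendsto (fun t => ‖q t‖) (𝓝[>] (0 : ℝ)) (𝓝 ‖p‖) :=
    (continuous_norm.tendsto p).comp hqten
  refine hnq.congr' ?_
  filter_upwards [self_mem_nhdsWithin] with t ht
  rw [hqdef]
  dsimp only
  rw [norm_smul, norm_inv, Real.norm_eq_abs, abs_of_pos ht, inv_mul_eq_div]

private lemma norm_projSet_div_le_tangent {K : Set E} (hcl : IsClosed K) (hconv : Convex ℝ K)
    (h0K : (0 : E) ∈ K) (z : E) {t : ℝ} (ht : 0 < t) :
    ‖projSet K (t • z)‖ / t ≤ ‖projSet (tangentConeOf K 0) z‖ := by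
  have hne : K.Nonempty := ⟨0, h0K⟩
  refine ge_of_tendsto (tendsto_norm_projSet_div hcl hconv h0K z) ?_
  filter_upwards [Ioc_mem_nhdsGT ht] with s hs
  exact norm_projSet_div_antitone hcl hconv hne z hs.1 hs.2

end AuxProj

/-- Monotonicity of the normalized projection.
For a closed convex `K ∋ 0`, `z ∈ ℝⁿ` and `0 < α < 1`, with `p₁ = Proj(z,K)` and
`p₂ = Proj(αz,K)`: `‖p₂‖ ≥ α‖p₁‖` and `‖p₂‖/α ≤ ‖Proj(z, T_K(0))‖`; moreover for any
unit vector `w` the function `g(t) = ‖Proj(t·w,K)‖/t` (with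
`g(0) = ‖Proj(w, T_K(0))‖`) is continuous and nonincreasing on `[0,∞)`. -/
theorem statement19 {n : ℕ} (K : Set (EuclideanSpace ℝ (Fin n)))
    (hKcl : IsClosed K) (hKconv : Convex ℝ K)
    (h0K : (0 : EuclideanSpace ℝ (Fin n)) ∈ K)
    (z : EuclideanSpace ℝ (Fin n)) (α : ℝ) (hα0 : 0 < α) (hα1 : α < 1) :
    α * ‖projSet K z‖ ≤ ‖projSet K (α • z)‖ ∧
    ‖projSet K (α • z)‖ / α ≤ ‖projSet (tangentConeOf K 0) z‖ ∧
    ∀ w : EuclideanSpace ℝ (Fin n), ‖w‖ = 1 →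
      ContinuousOn
        (fun t : ℝ =>
          if t = 0 then ‖projSet (tangentConeOf K 0) w‖ else ‖projSet K (t • w)‖ / t)
        (Set.Ici 0) ∧
      AntitoneOn
        (fun t : ℝ =>
          if t = 0 then ‖projSet (tangentConeOf K 0) w‖ else ‖projSet K (t • w)‖ / t)
        (Set.Ici 0) := by
  have hne : K.Nonempty := ⟨0, h0K⟩
  refine ⟨norm_projSet_smul_ge hKcl hKconv hne z hα0 hα1.le,
    norm_projSet_div_le_tangent hKcl hKconv h0K z hα0, ?_⟩
  intro w _
  set T := tangentConeOf K 0 with hT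
  set g : ℝ → ℝ := fun t =>
    if t = 0 then ‖projSet T w‖ else ‖projSet K (t • w)‖ / t with hgdef
  have hg0 : g 0 = ‖projSet T w‖ := by simp [hgdef]
  have hgpos : ∀ t : ℝ, t ≠ 0 → g t = ‖projSet K (t • w)‖ / t := by
    intro t ht
    simp [hgdef, ht]
  constructor
  · intro t ht
    rcases eq_or_lt_of_le (Set.mem_Ici.mp ht) with rfl | htpos
    · rw [← continuousWithinAt_sdiff_self, Set.Ici_sdiff_left]
      have htd := tendsto_norm_projSet_div hKcl hKconv h0K w
      have hev : (fun s : ℝ => ‖projSet K (s • w)‖ / s) =ᶠ[𝓝[>] (0:ℝ)] g := by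
        filter_upwards [self_mem_nhdsWithin] with s hs
        exact (hgpos s (ne_of_gt hs)).symm
      have : Filter.Tendsto g (𝓝[>] (0:ℝ)) (𝓝 (g 0)) := by
        rw [hg0]
        exact htd.congr' hev
      exact this
    · have hfun : ContinuousAt (fun s : ℝ => ‖projSet K (s • w)‖ / s) t := by
        refine ContinuousAt.div ?_ continuousAt_id (ne_of_gt htpos)
        exact (((projSet_continuous hKcl hKconv hne).comp
          (continuous_id.smul continuous_const)).norm).continuousAt
      have hev : (fun s : ℝ => ‖projSet K (s • w)‖ / s) =ᶠ[𝓝 t] g := by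
        filter_upwards [isOpen_Ioi.mem_nhds htpos] with s hs
        exact (hgpos s (ne_of_gt hs)).symm
      exact (hfun.congr hev).continuousWithinAt
  · intro s hs t ht hst
    rcases eq_or_lt_of_le (Set.mem_Ici.mp hs) with rfl | hspos
    · rcases eq_or_lt_of_le (Set.mem_Ici.mp ht) with rfl | htpos
      · exact le_rfl
      · rw [hg0, hgpos t (ne_of_gt htpos)]
        exact norm_projSet_div_le_tangent hKcl hKconv h0K w htpos
    · have htpos : 0 < t := lt_of_lt_of_le hspos hst
      rw [hgpos s (ne_of_gt hspos), hgpos t (ne_of_gt htpos)]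
      exact norm_projSet_div_antitone hKcl hKconv hne w hspos hst
end
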